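/- Let H(x,p) = sup_{v∈F(x)}⟨−v,p⟩, assume H(·,p) is semiconvex with constant c₂|p| on a ball containing the relevant trajectories, and let (x̄, p̄) and x_h solve −ẋ(s) = ∇_pH(x(s), p̄(s)) on [0,t] with x̄(t) and x̄(t)+h as respective terminal conditions, where ṗ̄(s) ∈ ∂ₓ⁻H(x̄(s), p̄(s)) a.e. Then ⟨p̄(0), x_h(0) − x̄(0)⟩ − ⟨p̄(t), h⟩ ≥ c₂ ∫₀ᵗ |p̄(s)| |x_h(s) − x̄(s)|² ds. -/

import Mathlib

open scoped RealInnerProductSpace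
open Set MeasureTheory

variable {n : ℕ}

/-- The Hamiltonian `H(x,p) = sup_{v ∈ F x} ⟨-v, p⟩` of a differential inclusion. -/
noncomputable def ham (F : EuclideanSpace ℝ (Fin n) → Set (EuclideanSpace ℝ (Fin n)))
    (x p : EuclideanSpace ℝ (Fin n)) : ℝ :=
  sSup ((fun v => ⟪-v, p⟫) '' F x)

/-- The Fréchet subdifferential of `f` at `x`. -/
def frechetSubdiff (f : EuclideanSpace ℝ (Fin n) → ℝ) (x : EuclideanSpace ℝ (Fin n)) :
    Set (EuclideanSpace ℝ (Fin n)) :=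
  {p | ∀ ε > (0 : ℝ), ∃ δ > (0 : ℝ), ∀ y, ‖y - x‖ < δ →
    f y - f x - ⟪p, y - x⟫ ≥ -(ε * ‖y - x‖)}

lemma ham_smul (F : EuclideanSpace ℝ (Fin n) → Set (EuclideanSpace ℝ (Fin n)))
    (hne : ∀ x, (F x).Nonempty) (hcpt : ∀ x, IsCompact (F x))
    (x p : EuclideanSpace ℝ (Fin n)) {r : ℝ} (hr : 0 ≤ r) :
    ham F x (r • p) = r * ham F x p := by
  have hcont : Continuous fun v : EuclideanSpace ℝ (Fin n) => ⟪-v, p⟫ :=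
    continuous_neg.inner continuous_const
  have hA : ((fun v => ⟪-v, p⟫) '' F x).Nonempty := (hne x).image _
  have hB : BddAbove ((fun v => ⟪-v, p⟫) '' F x) :=
    ((hcpt x).image hcont).bddAbove
  have hmono : Monotone fun y : ℝ => r * y := fun a b hab => mul_le_mul_of_nonneg_left hab hr
  have := hmono.map_csSup_of_continuousAt (continuous_const.mul continuous_id).continuousAt hA hB
  unfold ham
  simp only [Pi.mul_def, id] at this
  rw [show ((fun v => ⟪-v, r • p⟫) '' F x) = (fun y : ℝ => r * y) '' ((fun v => ⟪-v, p⟫) '' F x) by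
    rw [← image_comp]; exact image_congr fun v _ => by
      simp [real_inner_smul_right, Finset.mul_sum, mul_left_comm], ← this]

lemma ham_euler (F : EuclideanSpace ℝ (Fin n) → Set (EuclideanSpace ℝ (Fin n)))
    (hne : ∀ x, (F x).Nonempty) (hcpt : ∀ x, IsCompact (F x))
    (x p g : EuclideanSpace ℝ (Fin n))
    (hg : HasGradientAt (fun q => ham F x q) g p) :
    ⟪p, g⟫ = ham F x p := by
  have hc : HasDerivAt (fun r : ℝ => r • p) p 1 := by
    simpa using (hasDerivAt_id (1 : ℝ)).smul_const p
  have hF : HasFDerivAt (fun q => ham F x q) (InnerProductSpace.toDual ℝ _ g) p :=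
    hasGradientAt_iff_hasFDerivAt.1 hg
  have hF' : HasFDerivAt (fun q => ham F x q) (InnerProductSpace.toDual ℝ _ g) ((1:ℝ) • p) := by
    simpa using hF
  have h1 : HasDerivAt (fun r : ℝ => ham F x (r • p)) ⟪g, p⟫ 1 := by
    exact hF'.comp_hasDerivAt 1 hc
  have h2 : HasDerivAt (fun r : ℝ => ham F x (r • p)) (ham F x p) 1 := by
    have heq : (fun r : ℝ => r * ham F x p) =ᶠ[nhds (1 : ℝ)] fun r => ham F x (r • p) := by
      filter_upwards [eventually_gt_nhds (by norm_num : (0:ℝ) < 1)] with r hr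
      exact (ham_smul F hne hcpt x p hr.le).symm
    exact (hasDerivAt_mul_const (ham F x p)).congr_of_eventuallyEq heq.symm
  rw [real_inner_comm]
  exact h1.unique h2


/-- Key estimate in the propagation of proximal subgradients: if `x̄` and `x_h` solve
`-ẋ(s) = ∇_pH(x(s), p̄(s))` on `[0,t]` with terminal conditions `x̄(t)` and `x̄(t)+h`,
`p̄` is an absolutely continuous dual arc with `ṗ̄(s) ∈ ∂ₓ⁻H(x̄(s), p̄(s))` a.e., and
`H(·,p)` is semiconvex (subgradient inequality with constant `c₂‖p‖`) on a set `S`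
containing the trajectories, then
`⟨p̄(0), x_h(0) − x̄(0)⟩ − ⟨p̄(t), h⟩ ≥ c₂ ∫₀ᵗ ‖p̄(s)‖ ‖x_h(s) − x̄(s)‖² ds`. -/
theorem key_estimate_propagation
    (F : EuclideanSpace ℝ (Fin n) → Set (EuclideanSpace ℝ (Fin n)))
    (hne : ∀ x, (F x).Nonempty) (hcpt : ∀ x, IsCompact (F x))
    (Hp : EuclideanSpace ℝ (Fin n) → EuclideanSpace ℝ (Fin n) → EuclideanSpace ℝ (Fin n))
    (hgrad : ∀ x p : EuclideanSpace ℝ (Fin n), p ≠ 0 →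
      HasGradientAt (fun q => ham F x q) (Hp x p) p)
    (S : Set (EuclideanSpace ℝ (Fin n))) (c₂ : ℝ)
    (hsc : ∀ x ∈ S, ∀ y ∈ S, ∀ p ζ : EuclideanSpace ℝ (Fin n),
      ζ ∈ frechetSubdiff (fun z => ham F z p) x →
        ham F y p - ham F x p - ⟪ζ, y - x⟫ ≥ c₂ * ‖p‖ * ‖y - x‖ ^ 2)
    (t : ℝ) (ht : 0 < t) (h : EuclideanSpace ℝ (Fin n))
    (xbar xh pbar pbar' : ℝ → EuclideanSpace ℝ (Fin n))
    (hpne : ∀ s ∈ Icc (0 : ℝ) t, pbar s ≠ 0)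
    (hxbarS : ∀ s ∈ Icc (0 : ℝ) t, xbar s ∈ S)
    (hxhS : ∀ s ∈ Icc (0 : ℝ) t, xh s ∈ S)
    (hxbar : ∀ s ∈ Icc (0 : ℝ) t, HasDerivAt xbar (-(Hp (xbar s) (pbar s))) s)
    (hxh : ∀ s ∈ Icc (0 : ℝ) t, HasDerivAt xh (-(Hp (xh s) (pbar s))) s)
    (hterm : xh t = xbar t + h)
    (hpint : IntervalIntegrable pbar' volume 0 t)
    (hprep : ∀ s ∈ Icc (0 : ℝ) t, pbar s = pbar 0 + ∫ u in (0 : ℝ)..s, pbar' u)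
    (hpinc : ∀ᵐ s ∂volume, s ∈ Icc (0 : ℝ) t →
      pbar' s ∈ frechetSubdiff (fun z => ham F z (pbar s)) (xbar s)) :
    ⟪pbar 0, xh 0 - xbar 0⟫ - ⟪pbar t, h⟫ ≥
      c₂ * ∫ s in (0 : ℝ)..t, ‖pbar s‖ * ‖xh s - xbar s‖ ^ 2 := by
  classical
  have h0t : (0:ℝ) ∈ Icc (0:ℝ) t := ⟨le_refl _, ht.le⟩
  have htt : t ∈ Icc (0:ℝ) t := ⟨ht.le, le_refl _⟩
  have huIcc : uIcc (0:ℝ) t = Icc (0:ℝ) t := uIcc_of_le ht.le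
  set w : ℝ → EuclideanSpace ℝ (Fin n) := fun s => xh s - xbar s with hw_def
  set W : ℝ → EuclideanSpace ℝ (Fin n) :=
    fun s => Hp (xbar s) (pbar s) - Hp (xh s) (pbar s) with hW_def
  have hw : ∀ s ∈ Icc (0:ℝ) t, HasDerivAt w (W s) s := by
    intro s hs
    have := (hxh s hs).sub (hxbar s hs)
    simp only [neg_sub_neg] at this
    exact this
  -- continuity of `pbar` and `w` on `[0, t]`
  have hpc : ContinuousOn pbar (Icc (0:ℝ) t) := by
    have h1 : ContinuousOn (fun s => pbar 0 + ∫ u in (0:ℝ)..s, pbar' u) (Icc (0:ℝ) t) := by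
      refine continuousOn_const.add ?_
      have := intervalIntegral.continuousOn_primitive_interval
        (f := pbar') (μ := volume) (a := (0:ℝ)) (b := t) ?_
      · rwa [huIcc] at this
      · rw [huIcc]
        exact (intervalIntegrable_iff_integrableOn_Icc_of_le ht.le).1 hpint
    exact h1.congr fun s hs => hprep s hs
  have hwc : ContinuousOn w (Icc (0:ℝ) t) := fun s hs =>
    (hw s hs).continuousAt.continuousWithinAt
  -- a bound for `w` on `[0, t]`
  obtain ⟨C, hC⟩ : ∃ C, ∀ s ∈ Icc (0:ℝ) t, ‖w s‖ ≤ C := by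
    obtain ⟨C, hC⟩ := (isCompact_Icc.image_of_continuousOn hwc.norm).bddAbove
    exact ⟨C, fun s hs => hC (Set.mem_image_of_mem _ hs)⟩
  -- integrability of `s ↦ ⟪pbar' s, w s⟫`
  have hpint' : IntegrableOn pbar' (Icc (0:ℝ) t) :=
    (intervalIntegrable_iff_integrableOn_Icc_of_le ht.le).1 hpint
  have hqint : IntegrableOn (fun s => ⟪pbar' s, w s⟫) (Icc (0:ℝ) t) := by
    refine Integrable.mono' (hpint'.norm.mul_const C) ?_ ?_
    · exact hpint'.aestronglyMeasurable.inner (hwc.aestronglyMeasurable measurableSet_Icc)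
    · filter_upwards [ae_restrict_mem measurableSet_Icc] with s hs
      calc ‖⟪pbar' s, w s⟫‖ ≤ ‖pbar' s‖ * ‖w s‖ := abs_real_inner_le_norm _ _
        _ ≤ ‖pbar' s‖ * C := mul_le_mul_of_nonneg_left (hC s hs) (norm_nonneg _)
  have hqii : IntervalIntegrable (fun s => ⟪pbar' s, w s⟫) volume 0 t :=
    (intervalIntegrable_iff_integrableOn_Icc_of_le ht.le).2 hqint
  -- `pbar s - pbar s₀ = ∫_{s₀}^s pbar'`
  have hsub : ∀ s₀ ∈ Icc (0:ℝ) t, ∀ s ∈ Icc (0:ℝ) t,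
      pbar s - pbar s₀ = ∫ u in s₀..s, pbar' u := by
    intro s₀ hs₀ s hs
    have h1 : IntervalIntegrable pbar' volume 0 s := hpint.mono_set (by
      rw [huIcc]; exact uIcc_subset_Icc h0t hs)
    have h2 : IntervalIntegrable pbar' volume 0 s₀ := hpint.mono_set (by
      rw [huIcc]; exact uIcc_subset_Icc h0t hs₀)
    rw [hprep s hs, hprep s₀ hs₀, add_sub_add_left_eq_sub,
      intervalIntegral.integral_interval_sub_left h1 h2]
  -- inner with constant of previous identity
  have hflip : ∀ s₀ ∈ Icc (0:ℝ) t, ∀ s ∈ Icc (0:ℝ) t, ∀ c : EuclideanSpace ℝ (Fin n),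
      (∫ u in s₀..s, ⟪pbar' u, c⟫) = ⟪pbar s, c⟫ - ⟪pbar s₀, c⟫ := by
    intro s₀ hs₀ s hs c
    have hint : IntervalIntegrable pbar' volume s₀ s := hpint.mono_set (by
      rw [huIcc]; exact uIcc_subset_Icc hs₀ hs)
    have := (innerSL ℝ c).intervalIntegral_comp_comm hint
    rw [← inner_sub_left, hsub s₀ hs₀ s hs]
    simp only [innerSL_apply_apply] at this
    rw [real_inner_comm, ← this]
    exact intervalIntegral.integral_congr fun u _ => real_inner_comm _ _
  -- Euler's identity along the two trajectories
  have heul : ∀ s ∈ Icc (0:ℝ) t,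
      ⟪pbar s, W s⟫ = ham F (xbar s) (pbar s) - ham F (xh s) (pbar s) := by
    intro s hs
    have e1 := ham_euler F hne hcpt (xbar s) (pbar s) _ (hgrad (xbar s) (pbar s) (hpne s hs))
    have e2 := ham_euler F hne hcpt (xh s) (pbar s) _ (hgrad (xh s) (pbar s) (hpne s hs))
    simp only [W, inner_sub_right, e1, e2]
  -- the auxiliary function `G`
  set G : ℝ → ℝ := fun s => ⟪pbar s, w s⟫ - ∫ u in (0:ℝ)..s, ⟪pbar' u, w u⟫ with hG_def
  have hGcont : ContinuousOn G (Icc (0:ℝ) t) := by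
    refine (hpc.inner hwc).sub ?_
    have := intervalIntegral.continuousOn_primitive_interval
      (f := fun u => ⟪pbar' u, w u⟫) (μ := volume) (a := (0:ℝ)) (b := t) (by rwa [huIcc])
    rwa [huIcc] at this
  -- the derivative of `G`
  have hGderiv : ∀ s₀ ∈ Ioo (0:ℝ) t,
      HasDerivWithinAt G (ham F (xbar s₀) (pbar s₀) - ham F (xh s₀) (pbar s₀)) (Ioi s₀) s₀ := by
    intro s₀ hs₀
    have hs₀' : s₀ ∈ Icc (0:ℝ) t := Ioo_subset_Icc_self hs₀
    have key : HasDerivWithinAt G ⟪pbar s₀, W s₀⟫ (Icc (0:ℝ) t) s₀ := by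
      rw [hasDerivWithinAt_iff_isLittleO]
      set l := nhdsWithin s₀ (Icc (0:ℝ) t) with hl_def
      have hll : l ≤ nhds s₀ := nhdsWithin_le_nhds
      have hwlo : (fun s => w s - w s₀ - (s - s₀) • W s₀) =o[l] (fun s => s - s₀) :=
        (hasDerivAt_iff_isLittleO.1 (hw s₀ hs₀')).mono hll
      have hpb : Filter.Tendsto pbar l (nhds (pbar s₀)) := hpc s₀ hs₀'
      -- first piece
      have T1 : (fun s => ⟪pbar s, w s - w s₀ - (s - s₀) • W s₀⟫) =o[l] (fun s => s - s₀) := by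
        have hO : pbar =O[l] (fun _ => (1:ℝ)) := hpb.isBigO_one ℝ
        have hprod : (fun s => ‖pbar s‖ * ‖w s - w s₀ - (s - s₀) • W s₀‖)
            =o[l] (fun s => (1:ℝ) * (s - s₀)) := hO.norm_left.mul_isLittleO hwlo.norm_left
        refine (Asymptotics.isBigO_of_le l fun s => ?_).trans_isLittleO (by simpa using hprod)
        have h1 := abs_real_inner_le_norm (pbar s) (w s - w s₀ - (s - s₀) • W s₀)
        have h2 : (0:ℝ) ≤ ‖pbar s‖ * ‖w s - w s₀ - (s - s₀) • W s₀‖ :=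
          mul_nonneg (norm_nonneg _) (norm_nonneg _)
        simpa [Real.norm_eq_abs, abs_of_nonneg h2] using h1
      -- second piece
      have T2 : (fun s => (s - s₀) * ⟪pbar s - pbar s₀, W s₀⟫) =o[l] (fun s => s - s₀) := by
        have h0 : Filter.Tendsto (fun s => ⟪pbar s - pbar s₀, W s₀⟫) l (nhds 0) := by
          have h1 : Filter.Tendsto (fun s => pbar s - pbar s₀) l (nhds 0) := by
            have := hpb.sub (tendsto_const_nhds (α := ℝ) (x := pbar s₀))
            simpa using this
          have := Filter.Tendsto.inner (𝕜 := ℝ) h1 (tendsto_const_nhds (α := ℝ) (x := W s₀))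
          simpa using this
        have := (Asymptotics.isBigO_refl (fun s => s - s₀) l).mul_isLittleO
          ((Asymptotics.isLittleO_one_iff ℝ).2 h0)
        simpa using this
      -- third piece
      have T3 : (fun s => ∫ u in s₀..s, ⟪pbar' u, w u - w s₀⟫) =o[l] (fun s => s - s₀) := by
        set K : ℝ := ‖W s₀‖ + 1 with hK_def
        have hKpos : 0 < K := by positivity
        have hδev : ∀ᶠ u in nhds s₀, ‖w u - w s₀‖ ≤ K * |u - s₀| := by
          filter_upwards [(hasDerivAt_iff_isLittleO.1 (hw s₀ hs₀')).def one_pos] with u hu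
          have : ‖w u - w s₀‖ ≤ ‖w u - w s₀ - (u - s₀) • W s₀‖ + ‖(u - s₀) • W s₀‖ := by
            simpa using norm_add_le (w u - w s₀ - (u - s₀) • W s₀) ((u - s₀) • W s₀)
          rw [norm_smul, Real.norm_eq_abs] at this
          rw [Real.norm_eq_abs] at hu
          nlinarith [abs_nonneg (u - s₀), norm_nonneg (W s₀)]
        obtain ⟨δ, δpos, hδ⟩ := Metric.eventually_nhds_iff.1 hδev
        -- the primitive of `‖pbar'‖` based at `s₀`
        have hρc : ContinuousOn (fun s => ∫ u in s₀..s, ‖pbar' u‖) (Icc (0:ℝ) t) := by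
          have := intervalIntegral.continuousOn_primitive_interval'
            (f := fun u => ‖pbar' u‖) (μ := volume) (b₁ := (0:ℝ)) (b₂ := t) (a := s₀)
            hpint.norm (by rwa [huIcc])
          rwa [huIcc] at this
        have hρ0 : Filter.Tendsto (fun s => ∫ u in s₀..s, ‖pbar' u‖) l (nhds 0) := by
          have := hρc s₀ hs₀'
          simpa [ContinuousWithinAt, intervalIntegral.integral_same] using this
        have hbig : (fun s => ∫ u in s₀..s, ⟪pbar' u, w u - w s₀⟫)
            =O[l] (fun s => (∫ u in s₀..s, ‖pbar' u‖) * (s - s₀)) := by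
          rw [Asymptotics.isBigO_iff]
          refine ⟨K, ?_⟩
          have hev : ∀ᶠ s in l, |s - s₀| < δ ∧ s ∈ Icc (0:ℝ) t := by
            refine Filter.Eventually.and ?_ self_mem_nhdsWithin
            have : ∀ᶠ s in nhds s₀, |s - s₀| < δ := by
              have := Metric.ball_mem_nhds s₀ δpos
              filter_upwards [this] with s hs
              simpa [Real.dist_eq] using hs
            exact hll this
          filter_upwards [hev] with s hs
          obtain ⟨hsδ, hsIcc⟩ := hs
          have hint : IntervalIntegrable pbar' volume s₀ s := hpint.mono_set (by
            rw [huIcc]; exact uIcc_subset_Icc hs₀' hsIcc)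
          have hbound : ∀ᵐ u ∂volume.restrict (Set.uIoc s₀ s),
              ‖⟪pbar' u, w u - w s₀⟫‖ ≤ ‖pbar' u‖ * (K * |s - s₀|) := by
            refine Filter.Eventually.mono (ae_restrict_mem measurableSet_uIoc) fun u hu => ?_
            have huu : |u - s₀| ≤ |s - s₀| := by
              rcases le_total s₀ s with hc | hc
              · rw [uIoc_of_le hc] at hu
                rw [abs_of_nonneg (by linarith [hu.1.le] : (0:ℝ) ≤ u - s₀),
                  abs_of_nonneg (by linarith : (0:ℝ) ≤ s - s₀)]
                linarith [hu.2]
              · rw [uIoc_of_ge hc] at hu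
                rw [abs_of_nonpos (by linarith [hu.2] : u - s₀ ≤ 0),
                  abs_of_nonpos (by linarith : s - s₀ ≤ 0)]
                linarith [hu.1]
            have hwu : ‖w u - w s₀‖ ≤ K * |u - s₀| := hδ (by
              rw [Real.dist_eq]; exact lt_of_le_of_lt huu hsδ)
            calc ‖⟪pbar' u, w u - w s₀⟫‖ ≤ ‖pbar' u‖ * ‖w u - w s₀‖ :=
                  abs_real_inner_le_norm _ _
              _ ≤ ‖pbar' u‖ * (K * |u - s₀|) :=
                  mul_le_mul_of_nonneg_left hwu (norm_nonneg _)
              _ ≤ ‖pbar' u‖ * (K * |s - s₀|) := by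
                  have := mul_le_mul_of_nonneg_left huu hKpos.le
                  exact mul_le_mul_of_nonneg_left this (norm_nonneg _)
          have h1 := intervalIntegral.norm_integral_le_abs_of_norm_le
            (f := fun u => ⟪pbar' u, w u - w s₀⟫)
            (g := fun u => ‖pbar' u‖ * (K * |s - s₀|)) (μ := volume) hbound
            (hint.norm.mul_const _)
          have h2 : (∫ u in s₀..s, ‖pbar' u‖ * (K * |s - s₀|))
              = (∫ u in s₀..s, ‖pbar' u‖) * (K * |s - s₀|) :=
            intervalIntegral.integral_mul_const _ _
          rw [h2] at h1
          calc ‖∫ u in s₀..s, ⟪pbar' u, w u - w s₀⟫‖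
              ≤ |(∫ u in s₀..s, ‖pbar' u‖) * (K * |s - s₀|)| := h1
            _ = K * ‖(∫ u in s₀..s, ‖pbar' u‖) * (s - s₀)‖ := by
                rw [abs_mul, abs_mul, abs_abs, abs_of_pos hKpos, Real.norm_eq_abs, abs_mul]
                ring
        refine hbig.trans_isLittleO ?_
        have := ((Asymptotics.isLittleO_one_iff ℝ).2 hρ0).mul_isBigO
          (Asymptotics.isBigO_refl (fun s => s - s₀) l)
        simpa using this
      -- combining the three pieces
      have Tsum := (T1.add T2).sub T3
      refine Tsum.congr' ?_ Filter.EventuallyEq.rfl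
      filter_upwards [self_mem_nhdsWithin] with s hs
      have e1 : (∫ u in (0:ℝ)..s, ⟪pbar' u, w u⟫) - (∫ u in (0:ℝ)..s₀, ⟪pbar' u, w u⟫)
          = ∫ u in s₀..s, ⟪pbar' u, w u⟫ := by
        refine intervalIntegral.integral_interval_sub_left ?_ ?_
        · exact hqii.mono_set (by rw [huIcc]; exact uIcc_subset_Icc h0t hs)
        · exact hqii.mono_set (by rw [huIcc]; exact uIcc_subset_Icc h0t hs₀')
      have hii1 : IntervalIntegrable (fun u => ⟪pbar' u, w u⟫) volume s₀ s :=
        hqii.mono_set (by rw [huIcc]; exact uIcc_subset_Icc hs₀' hs)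
      have hii2 : IntervalIntegrable (fun u => ⟪pbar' u, w s₀⟫) volume s₀ s := by
        have hint : IntervalIntegrable pbar' volume s₀ s := hpint.mono_set (by
          rw [huIcc]; exact uIcc_subset_Icc hs₀' hs)
        rw [intervalIntegrable_iff] at hint ⊢
        have := (innerSL ℝ (w s₀)).integrable_comp hint
        refine this.congr ?_
        refine ae_of_all _ fun u => ?_
        simp only [innerSL_apply_apply]
        exact real_inner_comm _ _
      have e2 : (∫ u in s₀..s, ⟪pbar' u, w u - w s₀⟫)
          = (∫ u in s₀..s, ⟪pbar' u, w u⟫) - ∫ u in s₀..s, ⟪pbar' u, w s₀⟫ := by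
        rw [← intervalIntegral.integral_sub hii1 hii2]
        exact intervalIntegral.integral_congr fun u _ => by rw [inner_sub_right]
      have e3 : (∫ u in s₀..s, ⟪pbar' u, w s₀⟫) = ⟪pbar s, w s₀⟫ - ⟪pbar s₀, w s₀⟫ :=
        hflip s₀ hs₀' s hs (w s₀)
      simp only [G]
      rw [e2, e3, ← e1]
      simp only [inner_sub_right, inner_smul_right, smul_eq_mul, inner_sub_left]
      ring
    have hIcc_mem : Icc (0:ℝ) t ∈ nhdsWithin s₀ (Ioi s₀) :=
      Filter.mem_of_superset (Ioc_mem_nhdsGT_of_mem ⟨le_refl s₀, hs₀.2⟩)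
        (fun x hx => ⟨le_trans hs₀'.1 hx.1.le, hx.2⟩)
    rw [← heul s₀ hs₀']
    exact key.mono_of_mem_nhdsWithin hIcc_mem
  -- the comparison function φ
  set φ : ℝ → ℝ := fun s =>
    if pbar' s ∈ frechetSubdiff (fun z => ham F z (pbar s)) (xbar s) then
      -⟪pbar' s, w s⟫ - c₂ * (‖pbar s‖ * ‖w s‖ ^ 2)
    else ham F (xbar s) (pbar s) - ham F (xh s) (pbar s) with hφ_def
  have hψc : ContinuousOn (fun s => ‖pbar s‖ * ‖w s‖ ^ 2) (Icc (0:ℝ) t) :=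
    hpc.norm.mul (hwc.norm.pow 2)
  have hψii : IntervalIntegrable (fun s => ‖pbar s‖ * ‖w s‖ ^ 2) volume 0 t :=
    (hψc.mono (by rw [huIcc])).intervalIntegrable
  have hφnice : ∀ᵐ s ∂volume, s ∈ Icc (0:ℝ) t →
      φ s = -⟪pbar' s, w s⟫ - c₂ * (‖pbar s‖ * ‖w s‖ ^ 2) := by
    filter_upwards [hpinc] with s hs hsIcc
    simp only [φ, if_pos (hs hsIcc)]
  have hφint : IntegrableOn φ (Icc (0:ℝ) t) := by
    refine Integrable.congr (f := fun s => -⟪pbar' s, w s⟫ - c₂ * (‖pbar s‖ * ‖w s‖ ^ 2)) ?_ ?_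
    · exact hqint.neg.sub (((intervalIntegrable_iff_integrableOn_Icc_of_le ht.le).1
        hψii).const_mul c₂)
    · have h1 : ∀ᵐ s ∂volume.restrict (Icc (0:ℝ) t), s ∈ Icc (0:ℝ) t :=
        ae_restrict_mem measurableSet_Icc
      have h2 : ∀ᵐ s ∂volume.restrict (Icc (0:ℝ) t), s ∈ Icc (0:ℝ) t →
          φ s = -⟪pbar' s, w s⟫ - c₂ * (‖pbar s‖ * ‖w s‖ ^ 2) :=
        hφnice.filter_mono (ae_mono Measure.restrict_le_self)
      filter_upwards [h1, h2] with s hs1 hs2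
      exact (hs2 hs1).symm
  have hφbound : ∀ s ∈ Ioo (0:ℝ) t,
      ham F (xbar s) (pbar s) - ham F (xh s) (pbar s) ≤ φ s := by
    intro s hs
    have hsIcc : s ∈ Icc (0:ℝ) t := Ioo_subset_Icc_self hs
    by_cases hmem : pbar' s ∈ frechetSubdiff (fun z => ham F z (pbar s)) (xbar s)
    · have := hsc (xbar s) (hxbarS s hsIcc) (xh s) (hxhS s hsIcc) (pbar s) (pbar' s) hmem
      simp only [φ, if_pos hmem]
      have hws : xh s - xbar s = w s := rfl
      rw [hws] at this
      nlinarith [this]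
    · simp only [φ, if_neg hmem, le_refl]
  -- apply the fundamental theorem
  have main := intervalIntegral.sub_le_integral_of_hasDeriv_right_of_le ht.le hGcont
    hGderiv hφint hφbound
  -- compute both sides
  have hG0 : G 0 = ⟪pbar 0, w 0⟫ := by simp [G]
  have hGt : G t = ⟪pbar t, w t⟫ - ∫ u in (0:ℝ)..t, ⟪pbar' u, w u⟫ := rfl
  have hφeq : (∫ s in (0:ℝ)..t, φ s)
      = -(∫ s in (0:ℝ)..t, ⟪pbar' s, w s⟫) - c₂ * ∫ s in (0:ℝ)..t, ‖pbar s‖ * ‖w s‖ ^ 2 := by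
    have h1 : (∫ s in (0:ℝ)..t, φ s)
        = ∫ s in (0:ℝ)..t, (-⟪pbar' s, w s⟫ - c₂ * (‖pbar s‖ * ‖w s‖ ^ 2)) := by
      refine intervalIntegral.integral_congr_ae ?_
      filter_upwards [hφnice] with s hs hsΙ
      exact hs (by rw [uIoc_of_le ht.le] at hsΙ; exact Ioc_subset_Icc_self hsΙ)
    have hnegii : IntervalIntegrable (fun s => -⟪pbar' s, w s⟫) volume 0 t := hqii.neg
    have hcmii : IntervalIntegrable (fun s => c₂ * (‖pbar s‖ * ‖w s‖ ^ 2)) volume 0 t :=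
      hψii.const_mul c₂
    rw [h1, intervalIntegral.integral_sub hnegii hcmii,
      intervalIntegral.integral_neg, intervalIntegral.integral_const_mul]
  have hwt : w t = h := by simp [w, hterm]
  rw [hGt, hG0, hφeq, hwt] at main
  have hgoal : (∫ s in (0:ℝ)..t, ‖pbar s‖ * ‖xh s - xbar s‖ ^ 2)
      = ∫ s in (0:ℝ)..t, ‖pbar s‖ * ‖w s‖ ^ 2 := rfl
  rw [ge_iff_le, hgoal]
  have hw0 : xh 0 - xbar 0 = w 0 := rfl
  rw [hw0]
  linarith [main]
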